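/- Let m ≥ 2. The minimum, over all sequences π_0, π_1, …, π_T of permutations of {1, …, m} with π_0 arbitrary and each π_{t+1} obtained from π_t by an adjacent transposition, subject to the condition that every subset S ⊆ {1, …, m} with 1 ≤ |S| ≤ m−1 occurs as the prefix set of size |S| of some π_t, of the number of transpositions T, equals exactly 2^m − m − 1. -/

import Mathlib

/-- The prefix set of size `k` of a permutation `σ` of `{1, …, m}` (represented
0-indexed as `Equiv.Perm (Fin m)`): the set `{σ(1), …, σ(k)}`. -/
def prefixSet {m : ℕ} (σ : Equiv.Perm (Fin m)) (k : ℕ) : Finset (Fin m) :=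
  (Finset.univ.filter fun i : Fin m => (i : ℕ) < k).image σ

/-- The adjacent transposition at (1-indexed) position `j` of an ordering of
`m` variables: it swaps positions `j` and `j+1` (0-indexed `j−1` and `j`). -/
def adjSwap (m j : ℕ) : Equiv.Perm (Fin m) :=
  if h : 1 ≤ j ∧ j + 1 ≤ m then Equiv.swap ⟨j - 1, by omega⟩ ⟨j, by omega⟩ else 1

/-- `σ'` is obtained from `σ` by an adjacent transposition at some position. -/
def IsAdjSwapStep {m : ℕ} (σ σ' : Equiv.Perm (Fin m)) : Prop :=
  ∃ j : ℕ, 1 ≤ j ∧ j + 1 ≤ m ∧ σ' = σ * adjSwap m j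

open Equiv Finset

lemma prefixSet_mul_adjSwap {m : ℕ} (σ : Equiv.Perm (Fin m)) {j k : ℕ}
    (h1 : 1 ≤ j) (h2 : j + 1 ≤ m) (hk : k ≠ j) :
    prefixSet (σ * adjSwap m j) k = prefixSet σ k := by
  unfold prefixSet adjSwap
  rw [dif_pos ⟨h1, h2⟩]
  have key : ∀ i : Fin m, ((Equiv.swap (⟨j-1, by omega⟩ : Fin m) ⟨j, by omega⟩) i : ℕ) < k ↔ (i : ℕ) < k := by
    intro i
    rcases eq_or_ne i ⟨j-1, by omega⟩ with rfl | hne1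
    · rw [Equiv.swap_apply_left]; simp only [Fin.val_mk]; omega
    rcases eq_or_ne i ⟨j, by omega⟩ with rfl | hne2
    · rw [Equiv.swap_apply_right]; simp only [Fin.val_mk]; omega
    · rw [Equiv.swap_apply_of_ne_of_ne hne1 hne2]
  have himg : (Finset.univ.filter fun i : Fin m => (i : ℕ) < k).image
      (Equiv.swap (⟨j-1, by omega⟩ : Fin m) ⟨j, by omega⟩) =
      Finset.univ.filter fun i : Fin m => (i : ℕ) < k := by
    ext x
    simp only [Finset.mem_image, Finset.mem_filter, Finset.mem_univ, true_and]
    constructor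
    · rintro ⟨i, hi, rfl⟩; exact (key i).2 hi
    · intro hx
      refine ⟨Equiv.swap _ _ x, ?_, Equiv.swap_apply_self _ _ x⟩
      rw [key]; exact hx
  calc (Finset.univ.filter fun i : Fin m => (i : ℕ) < k).image
        ⇑(σ * Equiv.swap (⟨j-1, by omega⟩ : Fin m) ⟨j, by omega⟩)
      = ((Finset.univ.filter fun i : Fin m => (i : ℕ) < k).image
        (Equiv.swap (⟨j-1, by omega⟩ : Fin m) ⟨j, by omega⟩)).image σ := by
        rw [Finset.image_image]; rfl
    _ = _ := by rw [himg]

lemma prefixSet_card_le {m : ℕ} (σ : Equiv.Perm (Fin m)) (k : ℕ) :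
    (prefixSet σ k).card ≤ k := by
  unfold prefixSet
  calc _ ≤ (Finset.univ.filter fun i : Fin m => (i : ℕ) < k).card := Finset.card_image_le
    _ ≤ (Finset.range k).card := by
        refine Finset.card_le_card_of_injOn (fun i => (i : ℕ)) ?_ ?_
        · intro i hi; simp at hi ⊢; exact hi
        · intro a _ b _ h; exact Fin.ext h
    _ = k := Finset.card_range k

lemma lower_bound {m : ℕ} (hm : 2 ≤ m) (T : ℕ) (π : ℕ → Equiv.Perm (Fin m))
    (hstep : ∀ t, t < T → IsAdjSwapStep (π t) (π (t + 1)))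
    (hcov : ∀ S : Finset (Fin m), 1 ≤ S.card → S.card ≤ m - 1 →
      ∃ t ≤ T, prefixSet (π t) S.card = S) :
    2 ^ m - m - 1 ≤ T := by
  set A : ℕ → Finset (Finset (Fin m)) :=
    fun t => (Finset.Icc 1 (m-1)).image (fun k => prefixSet (π t) k) with hA
  have hAcard : ∀ t, (A t).card ≤ m - 1 := by
    intro t
    calc (A t).card ≤ (Finset.Icc 1 (m-1)).card := Finset.card_image_le
      _ = m - 1 := by rw [Nat.card_Icc]; omega
  have hsub : ∀ t, IsAdjSwapStep (π t) (π (t+1)) → ∃ x, A (t+1) ⊆ insert x (A t) := by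
    intro t ht
    obtain ⟨j, hj1, hj2, hj3⟩ := ht
    refine ⟨prefixSet (π (t+1)) j, fun S hS => ?_⟩
    simp only [hA, Finset.mem_image, Finset.mem_Icc] at hS
    obtain ⟨k, hk, rfl⟩ := hS
    rcases eq_or_ne k j with rfl | hne
    · exact Finset.mem_insert_self _ _
    · refine Finset.mem_insert_of_mem ?_
      rw [hj3, prefixSet_mul_adjSwap _ hj1 hj2 hne]
      exact Finset.mem_image_of_mem _ (Finset.mem_Icc.mpr hk)
  have hmain : ∀ t, (∀ s, s < t → IsAdjSwapStep (π s) (π (s+1))) →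
      ((Finset.range (t+1)).biUnion A).card ≤ (m - 1) + t := by
    intro t
    induction t with
    | zero => intro _; simpa using hAcard 0
    | succ t ih =>
      intro hs
      obtain ⟨x, hx⟩ := hsub t (hs t (by omega))
      have h1 : (Finset.range (t+2)).biUnion A ⊆
          insert x ((Finset.range (t+1)).biUnion A) := by
        intro S hS
        simp only [Finset.mem_biUnion, Finset.mem_range] at hS
        obtain ⟨s, hst, hSs⟩ := hS
        rcases Nat.lt_or_ge s (t+1) with h | h
        · exact Finset.mem_insert_of_mem (Finset.mem_biUnion.mpr ⟨s, Finset.mem_range.mpr h, hSs⟩)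
        · have : s = t + 1 := by omega
          subst this
          rcases Finset.mem_insert.mp (hx hSs) with h' | h'
          · exact Finset.mem_insert.mpr (Or.inl h')
          · exact Finset.mem_insert_of_mem (Finset.mem_biUnion.mpr ⟨t, by simp, h'⟩)
      calc ((Finset.range (t+2)).biUnion A).card ≤ _ := Finset.card_le_card h1
        _ ≤ ((Finset.range (t+1)).biUnion A).card + 1 := Finset.card_insert_le _ _
        _ ≤ (m-1) + t + 1 := by
            have := ih (fun s hst => hs s (by omega)); omega
  have hfilt : (Finset.univ.filter fun S : Finset (Fin m) => 1 ≤ S.card ∧ S.card ≤ m - 1)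
      ⊆ (Finset.range (T+1)).biUnion A := by
    intro S hS
    simp only [Finset.mem_filter, Finset.mem_univ, true_and] at hS
    obtain ⟨t, ht, hpre⟩ := hcov S hS.1 hS.2
    refine Finset.mem_biUnion.mpr ⟨t, Finset.mem_range.mpr (by omega), ?_⟩
    exact hpre ▸ Finset.mem_image_of_mem _ (Finset.mem_Icc.mpr hS)
  have hcardfilt : (Finset.univ.filter fun S : Finset (Fin m) => 1 ≤ S.card ∧ S.card ≤ m - 1).card
      = 2 ^ m - 2 := by
    have : (Finset.univ.filter fun S : Finset (Fin m) => 1 ≤ S.card ∧ S.card ≤ m - 1)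
        = Finset.univ \ {∅, Finset.univ} := by
      ext S
      simp only [Finset.mem_filter, Finset.mem_univ, true_and, Finset.mem_sdiff,
        Finset.mem_insert, Finset.mem_singleton]
      constructor
      · rintro ⟨h1, h2⟩
        push_neg
        constructor
        · rw [← Finset.card_pos]; omega
        · rintro rfl
          rw [Finset.card_univ, Fintype.card_fin] at h2; omega
      · intro h1
        push_neg at h1
        constructor
        · rcases Nat.eq_zero_or_pos S.card with h | h
          · exact absurd (Finset.card_eq_zero.mp h) h1.1.ne_empty
          · exact h
        · have : S.card < m := by
            have := Finset.card_lt_card (Finset.ssubset_univ_iff.mpr h1.2)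
            simpa [Finset.card_univ] using this
          omega
    rw [this, Finset.card_sdiff_of_subset (by intro x _; exact Finset.mem_univ x)]
    have h2 : ({∅, Finset.univ} : Finset (Finset (Fin m))).card = 2 := by
      rw [Finset.card_insert_of_notMem, Finset.card_singleton]
      simp only [Finset.mem_singleton]
      intro h
      have : (Finset.univ : Finset (Fin m)).card = 0 := by rw [← h]; simp
      rw [Finset.card_univ, Fintype.card_fin] at this; omega
    rw [h2, Finset.card_univ, Fintype.card_finset, Fintype.card_fin]
  have hbig : 2 ^ m - 2 ≤ (m - 1) + T := by
    calc 2 ^ m - 2 = _ := hcardfilt.symm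
      _ ≤ ((Finset.range (T+1)).biUnion A).card := Finset.card_le_card hfilt
      _ ≤ (m-1) + T := hmain T hstep
  have hpow : m < 2 ^ m := Nat.lt_two_pow_self
  omega

/-- The permutation of `Fin (m+1)` placing value `last` at position `p` and the
values `castSucc (σ i)` at the remaining positions, in order. -/
def midFun {m : ℕ} (σ : Equiv.Perm (Fin m)) (p : ℕ) (hp : p ≤ m) :
    Fin (m+1) → Fin (m+1) := fun x =>
  if h1 : (x : ℕ) < p then (σ ⟨x, by omega⟩).castSucc
  else if h2 : (x : ℕ) = p then Fin.last m
  else (σ ⟨(x : ℕ) - 1, by have := x.isLt; omega⟩).castSucc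

lemma midFun_inj {m : ℕ} (σ : Equiv.Perm (Fin m)) (p : ℕ) (hp : p ≤ m) :
    Function.Injective (midFun σ p hp) := by
  intro x y h
  have hx := x.isLt; have hy := y.isLt
  unfold midFun at h
  split_ifs at h with h1 h2 h3 h4 h5 h6 h7 h8 h9 <;>
  first
    | (exact absurd h (Fin.ne_of_lt (Fin.castSucc_lt_last _)))
    | (exact absurd h.symm (Fin.ne_of_lt (Fin.castSucc_lt_last _)))
    | (exact Fin.ext (by omega))
    | (rw [Fin.castSucc_inj] at h;
       have := congrArg Fin.val (σ.injective h);
       simp only [Fin.val_mk] at this;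
       exact Fin.ext (by omega))

noncomputable def mid {m : ℕ} (σ : Equiv.Perm (Fin m)) (p : ℕ) (hp : p ≤ m) :
    Equiv.Perm (Fin (m+1)) :=
  Equiv.ofBijective _ (Finite.injective_iff_bijective.mp (midFun_inj σ p hp))

lemma mid_apply {m : ℕ} (σ : Equiv.Perm (Fin m)) (p : ℕ) (hp : p ≤ m) (x : Fin (m+1)) :
    mid σ p hp x = midFun σ p hp x := rfl

lemma mid_castSucc_top {m : ℕ} (σ : Equiv.Perm (Fin m)) (i : Fin m) :
    mid σ m le_rfl i.castSucc = (σ i).castSucc := by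
  rw [mid_apply, midFun, dif_pos (by simpa using i.isLt)]
  exact congrArg _ (congrArg _ (Fin.ext rfl))

lemma mid_last_top {m : ℕ} (σ : Equiv.Perm (Fin m)) :
    mid σ m le_rfl (Fin.last m) = Fin.last m := by
  rw [mid_apply, midFun, dif_neg (by simp), dif_pos (by simp)]

lemma mid_zero_zero {m : ℕ} (σ : Equiv.Perm (Fin m)) :
    mid σ 0 (Nat.zero_le m) 0 = Fin.last m := by
  rw [mid_apply, midFun, dif_neg (by simp), dif_pos (by simp)]

lemma mid_zero_succ {m : ℕ} (σ : Equiv.Perm (Fin m)) (i : Fin m) :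
    mid σ 0 (Nat.zero_le m) i.succ = (σ i).castSucc := by
  rw [mid_apply, midFun, dif_neg (by simp), dif_neg (by simp [Fin.val_succ])]
  exact congrArg _ (congrArg _ (Fin.ext (by simp [Fin.val_succ])))

lemma adjSwap_eq {m j : ℕ} (h1 : 1 ≤ j) (h2 : j + 1 ≤ m) :
    adjSwap m j = Equiv.swap (⟨j - 1, by omega⟩ : Fin m) ⟨j, by omega⟩ := by
  rw [adjSwap, dif_pos ⟨h1, h2⟩]

lemma mid_step {m : ℕ} (σ : Equiv.Perm (Fin m)) {p : ℕ} (hp : p + 1 ≤ m) :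
    mid σ (p+1) hp * adjSwap (m+1) (p+1) = mid σ p (by omega) := by
  have hcond : 1 ≤ p + 1 ∧ (p+1) + 1 ≤ m + 1 := ⟨by omega, by omega⟩
  refine Equiv.ext fun x => ?_
  rw [Equiv.Perm.mul_apply, adjSwap_eq hcond.1 hcond.2]
  simp only [Nat.add_sub_cancel]
  rcases eq_or_ne x ⟨p, by omega⟩ with rfl | hne1
  · rw [Equiv.swap_apply_left]
    simp [mid_apply, midFun]
  · rcases eq_or_ne x ⟨p+1, by omega⟩ with rfl | hne2
    · rw [Equiv.swap_apply_right]
      simp [mid_apply, midFun]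
    · rw [Equiv.swap_apply_of_ne_of_ne hne1 hne2]
      have hv1 : (x : ℕ) ≠ p := fun h => hne1 (Fin.ext h)
      have hv2 : (x : ℕ) ≠ p + 1 := fun h => hne2 (Fin.ext h)
      have hx := x.isLt
      rw [mid_apply, mid_apply, midFun, midFun]
      rcases Nat.lt_or_ge (x : ℕ) p with h | h
      · rw [dif_pos (by omega), dif_pos (by omega)]
      · rw [dif_neg (by omega), dif_neg (by omega), dif_neg (by omega), dif_neg (by omega)]

lemma mid_top_mul_adjSwap {m : ℕ} (σ : Equiv.Perm (Fin m)) {j : ℕ}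
    (h1 : 1 ≤ j) (h2 : j + 1 ≤ m) :
    mid σ m le_rfl * adjSwap (m+1) j = mid (σ * adjSwap m j) m le_rfl := by
  refine Equiv.ext fun x => ?_
  rw [Equiv.Perm.mul_apply, adjSwap_eq h1 (by omega : j + 1 ≤ m + 1)]
  have e1 : (⟨j - 1, by omega⟩ : Fin (m+1)) = (⟨j - 1, by omega⟩ : Fin m).castSucc :=
    Fin.ext rfl
  have e2 : (⟨j, by omega⟩ : Fin (m+1)) = (⟨j, by omega⟩ : Fin m).castSucc :=
    Fin.ext rfl
  rw [e1, e2]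
  induction x using Fin.lastCases with
  | last =>
    rw [Equiv.swap_apply_of_ne_of_ne (Fin.castSucc_lt_last _).ne' (Fin.castSucc_lt_last _).ne']
    rw [mid_last_top, mid_last_top]
  | cast i =>
    rw [Function.Injective.swap_apply (Fin.castSucc_injective m)]
    rw [mid_castSucc_top, mid_castSucc_top]
    rw [Equiv.Perm.mul_apply, adjSwap_eq h1 h2]

lemma mid_zero_mul_adjSwap {m : ℕ} (σ : Equiv.Perm (Fin m)) {j : ℕ}
    (h1 : 1 ≤ j) (h2 : j + 1 ≤ m) :
    mid σ 0 (Nat.zero_le m) * adjSwap (m+1) (j+1) = mid (σ * adjSwap m j) 0 (Nat.zero_le m) := by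
  refine Equiv.ext fun x => ?_
  rw [Equiv.Perm.mul_apply, adjSwap_eq (by omega : 1 ≤ j + 1) (by omega : (j+1) + 1 ≤ m + 1)]
  have e1 : (⟨j + 1 - 1, by omega⟩ : Fin (m+1)) = (⟨j - 1, by omega⟩ : Fin m).succ :=
    Fin.ext (by simp [Fin.val_succ]; omega)
  have e2 : (⟨j + 1, by omega⟩ : Fin (m+1)) = (⟨j, by omega⟩ : Fin m).succ :=
    Fin.ext rfl
  rw [e1, e2]
  induction x using Fin.cases with
  | zero =>
    rw [Equiv.swap_apply_of_ne_of_ne (Fin.succ_ne_zero _).symm (Fin.succ_ne_zero _).symm]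
    rw [mid_zero_zero, mid_zero_zero]
  | succ i =>
    rw [Function.Injective.swap_apply (Fin.succ_injective m)]
    rw [mid_zero_succ, mid_zero_succ]
    rw [Equiv.Perm.mul_apply, adjSwap_eq h1 h2]

lemma prefixSet_zero {m : ℕ} (σ : Equiv.Perm (Fin m)) : prefixSet σ 0 = ∅ := by
  simp [prefixSet]

lemma prefixSet_full {m : ℕ} (σ : Equiv.Perm (Fin m)) : prefixSet σ m = Finset.univ := by
  unfold prefixSet
  have : (Finset.univ.filter fun i : Fin m => (i : ℕ) < m) = Finset.univ := by
    ext i; simp [i.isLt]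
  rw [this]
  exact Finset.image_univ_equiv σ

lemma prefixSet_mid_top {m : ℕ} (σ : Equiv.Perm (Fin m)) {k : ℕ} (hk : k ≤ m) :
    prefixSet (mid σ m le_rfl) k = (prefixSet σ k).image Fin.castSucc := by
  unfold prefixSet
  have hfil : (Finset.univ.filter fun i : Fin (m+1) => (i : ℕ) < k)
      = (Finset.univ.filter fun i : Fin m => (i : ℕ) < k).image Fin.castSucc := by
    ext y
    simp only [Finset.mem_filter, Finset.mem_univ, true_and, Finset.mem_image]
    constructor
    · intro hy
      exact ⟨⟨(y : ℕ), by omega⟩, hy, Fin.ext rfl⟩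
    · rintro ⟨i, hi, rfl⟩
      simpa using hi
  rw [hfil, Finset.image_image, Finset.image_image]
  exact Finset.image_congr (fun i _ => mid_castSucc_top σ i)

lemma prefixSet_mid_zero {m : ℕ} (σ : Equiv.Perm (Fin m)) {k : ℕ} (hk : k ≤ m) :
    prefixSet (mid σ 0 (Nat.zero_le m)) (k+1)
      = insert (Fin.last m) ((prefixSet σ k).image Fin.castSucc) := by
  unfold prefixSet
  have hfil : (Finset.univ.filter fun i : Fin (m+1) => (i : ℕ) < k + 1)
      = insert (0 : Fin (m+1)) ((Finset.univ.filter fun i : Fin m => (i : ℕ) < k).image Fin.succ) := by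
    ext y
    simp only [Finset.mem_filter, Finset.mem_univ, true_and, Finset.mem_insert,
      Finset.mem_image]
    constructor
    · intro hy
      rcases Nat.eq_zero_or_pos (y : ℕ) with h0 | h0
      · exact Or.inl (Fin.ext h0)
      · refine Or.inr ⟨⟨(y : ℕ) - 1, by have := y.isLt; omega⟩, by simp; omega, ?_⟩
        exact Fin.ext (by simp [Fin.val_succ]; omega)
    · rintro (rfl | ⟨i, hi, rfl⟩)
      · simp
      · simp [Fin.val_succ]; omega
  rw [hfil, Finset.image_insert, mid_zero_zero, Finset.image_image, Finset.image_image]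
  congr 1

lemma prefixSet_mul_left {m : ℕ} (ρ σ : Equiv.Perm (Fin m)) (k : ℕ) :
    prefixSet (ρ * σ) k = (prefixSet σ k).image ρ := by
  unfold prefixSet
  rw [Finset.image_image]
  rfl

lemma image_filter_castSucc {m : ℕ} (S : Finset (Fin (m+1))) :
    ((Finset.univ.filter fun j : Fin m => j.castSucc ∈ S).image Fin.castSucc)
      = S.erase (Fin.last m) := by
  ext y
  simp only [Finset.mem_image, Finset.mem_filter, Finset.mem_univ, true_and,
    Finset.mem_erase]
  constructor
  · rintro ⟨i, hi, rfl⟩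
    exact ⟨(Fin.castSucc_lt_last _).ne, hi⟩
  · rintro ⟨hne, hy⟩
    have hv : (y : ℕ) < m := by
      have := y.isLt
      have : (y : ℕ) ≠ m := fun h => hne (Fin.ext (by simpa using h))
      omega
    refine ⟨⟨(y : ℕ), hv⟩, ?_, Fin.ext rfl⟩
    have : (⟨(y : ℕ), hv⟩ : Fin m).castSucc = y := Fin.ext rfl
    rwa [this]

lemma mid_congr {m : ℕ} (σ : Equiv.Perm (Fin m)) {p q : ℕ} (h : p = q) (hp : p ≤ m) (hq : q ≤ m) :
    mid σ p hp = mid σ q hq := by subst h; rfl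

lemma mid_congr_perm {m : ℕ} {σ τ : Equiv.Perm (Fin m)} (h : σ = τ) (p : ℕ) (hp : p ≤ m) :
    mid σ p hp = mid τ p hp := by subst h; rfl

lemma mid_one_top {m : ℕ} : mid (1 : Equiv.Perm (Fin m)) m le_rfl = 1 := by
  refine Equiv.ext fun x => ?_
  induction x using Fin.lastCases with
  | last => rw [mid_last_top]; rfl
  | cast i => rw [mid_castSucc_top]; rfl

lemma exists_walk : ∀ m : ℕ, 2 ≤ m →
    ∃ π : ℕ → Equiv.Perm (Fin m), π 0 = 1 ∧
      (∀ t, t < 2^m - m - 1 → IsAdjSwapStep (π t) (π (t+1))) ∧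
      (∀ S : Finset (Fin m), 1 ≤ S.card → S.card ≤ m - 1 →
        ∃ t ≤ 2^m - m - 1, prefixSet (π t) S.card = S) := by
  intro m hm
  induction m, hm using Nat.le_induction with
  | base =>
    refine ⟨fun t => if t = 0 then 1 else adjSwap 2 1, rfl, ?_, ?_⟩
    · intro t ht
      norm_num at ht
      subst ht
      exact ⟨1, le_rfl, le_rfl, by simp⟩
    · intro S h1 h2
      norm_num at h2
      have hc : S.card = 1 := le_antisymm h2 h1
      obtain ⟨x, rfl⟩ := Finset.card_eq_one.mp hc
      rw [Finset.card_singleton]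
      fin_cases x
      · exact ⟨0, by norm_num, by decide⟩
      · exact ⟨1, by norm_num, by decide⟩
  | succ m hm ih =>
    obtain ⟨π₁, h0, hstep, hcov⟩ := ih
    set T₁ := 2^m - m - 1 with hT₁
    have hpow : m < 2 ^ m := Nat.lt_two_pow_self
    have hT : 2^(m+1) - (m+1) - 1 = T₁ + m + T₁ := by
      rw [hT₁, pow_succ]; omega
    set σe := π₁ T₁ with hσe
    set π₃ : ℕ → Equiv.Perm (Fin m) := fun s => σe * π₁ s with hπ₃
    set W : ℕ → Equiv.Perm (Fin (m+1)) := fun t =>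
      if t ≤ T₁ then mid (π₁ t) m le_rfl
      else if t ≤ T₁ + m then mid σe (m - (t - T₁)) (Nat.sub_le m _)
      else mid (π₃ (t - (T₁ + m))) 0 (Nat.zero_le m) with hW
    have hPi1 : ∀ t, t ≤ T₁ → W t = mid (π₁ t) m le_rfl := by
      intro t ht; rw [hW]; simp only [if_pos ht]
    have hPi2 : ∀ s, s ≤ m → W (T₁ + s) = mid σe (m - s) (Nat.sub_le m s) := by
      intro s hs
      rcases Nat.eq_zero_or_pos s with rfl | hpos
      · rw [hPi1 (T₁ + 0) (by omega)]
        rfl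
      · rw [hW]
        simp only [if_neg (by omega : ¬ T₁ + s ≤ T₁), if_pos (by omega : T₁ + s ≤ T₁ + m)]
        exact mid_congr _ (by omega) _ _
    have hPi3 : ∀ s, W (T₁ + m + s) = mid (π₃ s) 0 (Nat.zero_le m) := by
      intro s
      rcases Nat.eq_zero_or_pos s with rfl | hpos
      · simp only [Nat.add_zero]
        rw [hPi2 m le_rfl]
        refine (mid_congr _ (Nat.sub_self m) _ (by omega)).trans (mid_congr_perm ?_ _ _)
        rw [hπ₃]; simp [h0]
      · rw [hW]
        simp only [if_neg (by omega : ¬ T₁ + m + s ≤ T₁),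
          if_neg (by omega : ¬ T₁ + m + s ≤ T₁ + m)]
        exact mid_congr_perm (congrArg π₃ (by omega)) _ _
    refine ⟨W, ?_, ?_, ?_⟩
    · rw [hPi1 0 (by omega), h0, mid_one_top]
    · -- steps
      intro t ht
      rw [hT] at ht
      rcases Nat.lt_or_ge t T₁ with h | h
      · obtain ⟨j, hj1, hj2, hj3⟩ := hstep t h
        refine ⟨j, hj1, by omega, ?_⟩
        rw [hPi1 t (by omega), hPi1 (t+1) (by omega), hj3]
        exact (mid_top_mul_adjSwap _ hj1 hj2).symm
      · rcases Nat.lt_or_ge t (T₁ + m) with h' | h'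
        · -- phase 2
          set s := t - T₁ with hs
          have hsm : s < m := by omega
          refine ⟨m - s - 1 + 1, by omega, by omega, ?_⟩
          have w1 : W t = mid σe (m - s) (Nat.sub_le m s) := by
            rw [show t = T₁ + s by omega]; exact hPi2 s (by omega)
          have w2 : W (t+1) = mid σe (m - (s+1)) (Nat.sub_le m (s+1)) := by
            rw [show t + 1 = T₁ + (s+1) by omega]; exact hPi2 (s+1) (by omega)
          rw [w1, w2]
          rw [mid_congr σe (by omega : m - (s+1) = m - s - 1) _ (by omega)]
          rw [mid_congr σe (by omega : m - s = m - s - 1 + 1) _ (by omega)]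
          exact (mid_step σe (by omega)).symm
        · -- phase 3
          set s := t - (T₁ + m) with hs
          have hsT : s < T₁ := by omega
          obtain ⟨j, hj1, hj2, hj3⟩ := hstep s hsT
          refine ⟨j + 1, by omega, by omega, ?_⟩
          have w1 : W t = mid (π₃ s) 0 (Nat.zero_le m) := by
            rw [show t = T₁ + m + s by omega]; exact hPi3 s
          have w2 : W (t+1) = mid (π₃ (s+1)) 0 (Nat.zero_le m) := by
            rw [show t + 1 = T₁ + m + (s+1) by omega]; exact hPi3 (s+1)
          rw [w1, w2]
          have e3 : π₃ (s+1) = π₃ s * adjSwap m j := by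
            rw [hπ₃]; simp only; rw [hj3, mul_assoc]
          rw [e3]
          exact (mid_zero_mul_adjSwap _ hj1 hj2).symm
    · -- coverage
      intro S h1 h2
      have h2' : S.card ≤ m := by omega
      rw [hT]
      set B := Finset.univ.filter (fun j : Fin m => j.castSucc ∈ S) with hB
      have hBS : B.image Fin.castSucc = S.erase (Fin.last m) := image_filter_castSucc S
      have hBcard : B.card = (S.erase (Fin.last m)).card := by
        rw [← hBS]; exact (Finset.card_image_of_injective _ (Fin.castSucc_injective m)).symm
      by_cases hl : Fin.last m ∈ S
      · -- last ∈ S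
        have hScard : B.card = S.card - 1 := by
          rw [hBcard, Finset.card_erase_of_mem hl]
        have hSins : insert (Fin.last m) (B.image Fin.castSucc) = S := by
          rw [hBS]; exact Finset.insert_erase hl
        rcases Nat.lt_or_ge S.card 2 with hc2 | hc2
        · -- S = {last}
          have hc1 : S.card = 1 := by omega
          have hBempty : B = ∅ := Finset.card_eq_zero.mp (by omega)
          refine ⟨T₁ + m, by omega, ?_⟩
          have w0 : W (T₁ + m) = mid (π₃ 0) 0 (Nat.zero_le m) := hPi3 0
          rw [w0, hc1]
          have hpz := prefixSet_mid_zero (π₃ 0) (Nat.zero_le m) (k := 0)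
          simp only [Nat.zero_add] at hpz
          rw [hpz, prefixSet_zero]
          rw [← hSins, hBempty]
        · -- general last ∈ S
          have hB1 : 1 ≤ B.card := by omega
          have hB2 : B.card ≤ m - 1 := by omega
          set B' := B.image σe.symm with hB'
          have hB'card : B'.card = B.card :=
            Finset.card_image_of_injective _ σe.symm.injective
          have hB1' : 1 ≤ B'.card := by rw [hB'card]; omega
          have hB2' : B'.card ≤ m - 1 := by rw [hB'card]; omega
          obtain ⟨t, htT, hpre⟩ := hcov B' hB1' hB2'
          refine ⟨T₁ + m + t, by omega, ?_⟩
          rw [hPi3 t]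
          have hcS : S.card = B.card + 1 := by omega
          rw [hcS, prefixSet_mid_zero _ (by omega)]
          have : prefixSet (π₃ t) B.card = B := by
            rw [hπ₃]
            simp only
            rw [prefixSet_mul_left, ← hB'card, hpre, hB']
            rw [Finset.image_image]
            ext x
            simp
          rw [this, hSins]
      · -- last ∉ S
        have hSB : B.image Fin.castSucc = S := by
          rw [hBS, Finset.erase_eq_of_notMem hl]
        have hScard : B.card = S.card := by
          rw [hBcard, Finset.erase_eq_of_notMem hl]
        rcases Nat.lt_or_ge S.card m with hlt | hge
        · have c1 : 1 ≤ B.card := by rw [hScard]; omega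
          have c2 : B.card ≤ m - 1 := by rw [hScard]; omega
          obtain ⟨t, htT, hpre⟩ := hcov B c1 c2
          refine ⟨t, by omega, ?_⟩
          rw [hPi1 t htT, prefixSet_mid_top _ h2', ← hScard, hpre, hSB]
        · have hcm : S.card = m := by omega
          have hBuniv : B = Finset.univ := Finset.eq_univ_of_card _ (by
            rw [hScard, hcm]; simp)
          refine ⟨0, by omega, ?_⟩
          rw [hPi1 0 (by omega), prefixSet_mid_top _ h2', hcm, prefixSet_full, ← hBuniv, hSB]

/-- For m ≥ 2, the minimum number T of adjacent transpositions, over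
all sequences π_0, …, π_T of permutations of {1, …, m} (π_0 arbitrary, each π_{t+1}
obtained from π_t by an adjacent transposition) such that every subset S with
1 ≤ |S| ≤ m−1 occurs as the prefix set of size |S| of some π_t, equals
exactly 2^m − m − 1. -/
theorem greedy_is_optimal (m : ℕ) (hm : 2 ≤ m) :
    IsLeast {T : ℕ | ∃ π : ℕ → Equiv.Perm (Fin m),
        (∀ t, t < T → IsAdjSwapStep (π t) (π (t + 1))) ∧
        ∀ S : Finset (Fin m), 1 ≤ S.card → S.card ≤ m - 1 →
          ∃ t ≤ T, prefixSet (π t) S.card = S}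
      (2 ^ m - m - 1) := by
  constructor
  · obtain ⟨π, _, hstep, hcov⟩ := exists_walk m hm
    exact ⟨π, hstep, hcov⟩
  · intro T hT
    obtain ⟨π, hstep, hcov⟩ := hT
    exact lower_bound hm T π hstep hcov
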